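/- arXiv:2009.11401 — 2 statements merged into one kernel-verified Lean document; each statement's English description precedes it below -/
import Mathlib

section
/- Let R ≥ 1, let λ denote Lebesgue measure on ℝ^R, and let a ∈ ℝ^R and r ≥ 0. Then ∫_{B̄(a,r)} exp(−‖x‖²/2) dλ(x) ≥ exp(−‖a‖²/2) · ∫_{B̄(0,r)} exp(−‖x‖²/2) dλ(x), where B̄(c,r) denotes the closed Euclidean ball of radius r centered at c. Equivalently, the standard Gaussian measure of a ball of radius r centered at a is at least exp(−‖a‖²/2) times that of the ball of the same radius centered at the origin. -/
open MeasureTheory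

set_option maxHeartbeats 1000000

/-- Gaussian shift inequality (consequence of Anderson's lemma):
the standard Gaussian integral over a ball of radius `r` centered at `a` is at least
`exp(−‖a‖²/2)` times that over the ball of the same radius centered at the origin. -/
theorem gaussian_shift_ball_lower_bound (R : ℕ) (hR : 1 ≤ R)
    (a : EuclideanSpace ℝ (Fin R)) (r : ℝ) (hr : 0 ≤ r) :
    Real.exp (-‖a‖ ^ 2 / 2) *
        ∫ x in Metric.closedBall (0 : EuclideanSpace ℝ (Fin R)) r, Real.exp (-‖x‖ ^ 2 / 2) ≤
      ∫ x in Metric.closedBall a r, Real.exp (-‖x‖ ^ 2 / 2) := by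
  set B := Metric.closedBall (0 : EuclideanSpace ℝ (Fin R)) r with hBdef
  have hcomp : IsCompact B := ProperSpace.isCompact_closedBall _ _
  have hcont1 : Continuous fun x : EuclideanSpace ℝ (Fin R) => Real.exp (-‖x‖ ^ 2 / 2) := by
    apply Real.continuous_exp.comp
    exact (continuous_norm.pow 2).neg.div_const 2
  have hcontt : Continuous fun x : EuclideanSpace ℝ (Fin R) => (inner ℝ x a : ℝ) :=
    continuous_id.inner continuous_const
  have hcont2 : Continuous fun x : EuclideanSpace ℝ (Fin R) =>
      Real.exp (-‖x‖ ^ 2 / 2) * Real.exp (-(inner ℝ x a : ℝ)) :=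
    hcont1.mul (Real.continuous_exp.comp hcontt.neg)
  have hcont3 : Continuous fun x : EuclideanSpace ℝ (Fin R) =>
      Real.exp (-‖x‖ ^ 2 / 2) * Real.exp ((inner ℝ x a : ℝ)) :=
    hcont1.mul (Real.continuous_exp.comp hcontt)
  have hi1 : IntegrableOn (fun x : EuclideanSpace ℝ (Fin R) =>
      Real.exp (-‖x‖ ^ 2 / 2)) B volume :=
    hcont1.continuousOn.integrableOn_compact hcomp
  have hi2 : IntegrableOn (fun x : EuclideanSpace ℝ (Fin R) =>
      Real.exp (-‖x‖ ^ 2 / 2) * Real.exp (-(inner ℝ x a : ℝ))) B volume :=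
    hcont2.continuousOn.integrableOn_compact hcomp
  have hi3 : IntegrableOn (fun x : EuclideanSpace ℝ (Fin R) =>
      Real.exp (-‖x‖ ^ 2 / 2) * Real.exp ((inner ℝ x a : ℝ))) B volume :=
    hcont3.continuousOn.integrableOn_compact hcomp
  have hi4 : IntegrableOn (fun x : EuclideanSpace ℝ (Fin R) =>
      Real.exp (-‖x‖ ^ 2 / 2) * (Real.exp (-(inner ℝ x a : ℝ)) + Real.exp ((inner ℝ x a : ℝ)))) B
      volume :=
    (hcont1.mul ((Real.continuous_exp.comp hcontt.neg).add
      (Real.continuous_exp.comp hcontt))).continuousOn.integrableOn_compact hcomp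
  have hi5 : IntegrableOn (fun x : EuclideanSpace ℝ (Fin R) =>
      2 * Real.exp (-‖x‖ ^ 2 / 2)) B volume :=
    ((continuous_const.mul hcont1)).continuousOn.integrableOn_compact hcomp
  -- translation
  have hmp : MeasurePreserving (fun x : EuclideanSpace ℝ (Fin R) => x + a) volume volume :=
    measurePreserving_add_right volume a
  have hemb : MeasurableEmbedding (fun x : EuclideanSpace ℝ (Fin R) => x + a) :=
    (MeasurableEquiv.addRight a).measurableEmbedding
  have hpre : (fun x : EuclideanSpace ℝ (Fin R) => x + a) ⁻¹' Metric.closedBall a r = B := by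
    ext x
    simp [hBdef, Metric.mem_closedBall, dist_eq_norm]
  have key : ∫ x in Metric.closedBall a r, Real.exp (-‖x‖ ^ 2 / 2)
      = ∫ x in B, Real.exp (-‖x + a‖ ^ 2 / 2) := by
    rw [← hmp.setIntegral_preimage_emb hemb (fun x => Real.exp (-‖x‖ ^ 2 / 2))
      (Metric.closedBall a r), hpre]
  have hexp : ∀ x : EuclideanSpace ℝ (Fin R), Real.exp (-‖x + a‖ ^ 2 / 2)
      = Real.exp (-‖a‖ ^ 2 / 2) * (Real.exp (-‖x‖ ^ 2 / 2) * Real.exp (-(inner ℝ x a : ℝ))) := by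
    intro x
    rw [← Real.exp_add, ← Real.exp_add]
    congr 1
    have h := @norm_add_sq_real (EuclideanSpace ℝ (Fin R)) _ _ x a
    rw [neg_div, h]
    ring
  rw [key]
  simp_rw [hexp]
  rw [MeasureTheory.integral_const_mul]
  apply mul_le_mul_of_nonneg_left _ (Real.exp_nonneg _)
  -- symmetrization
  set I := ∫ x in B, Real.exp (-‖x‖ ^ 2 / 2) * Real.exp (-(inner ℝ x a : ℝ)) with hIdef
  have hmpn : MeasurePreserving (fun x : EuclideanSpace ℝ (Fin R) => -x) volume volume :=
    Measure.measurePreserving_neg volume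
  have hembn : MeasurableEmbedding (fun x : EuclideanSpace ℝ (Fin R) => -x) :=
    (MeasurableEquiv.neg (EuclideanSpace ℝ (Fin R))).measurableEmbedding
  have hpren : (fun x : EuclideanSpace ℝ (Fin R) => -x) ⁻¹' B = B := by
    ext x
    simp [hBdef, Metric.mem_closedBall, dist_eq_norm]
  have hneg : I = ∫ x in B, Real.exp (-‖x‖ ^ 2 / 2) * Real.exp ((inner ℝ x a : ℝ)) := by
    have h2 := hmpn.setIntegral_preimage_emb hembn
      (fun x => Real.exp (-‖x‖ ^ 2 / 2) * Real.exp (-(inner ℝ x a : ℝ))) B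
    rw [hpren] at h2
    rw [hIdef, ← h2]
    congr 1
    ext x
    simp [inner_neg_left]
  have hsum : I + I = ∫ x in B,
      Real.exp (-‖x‖ ^ 2 / 2) * (Real.exp (-(inner ℝ x a : ℝ)) + Real.exp ((inner ℝ x a : ℝ))) := by
    nth_rewrite 2 [hneg]
    rw [hIdef, ← integral_add hi2 hi3]
    congr 1
    ext x
    ring
  have hptwise : ∀ x ∈ B, 2 * Real.exp (-‖x‖ ^ 2 / 2) ≤
      Real.exp (-‖x‖ ^ 2 / 2) * (Real.exp (-(inner ℝ x a : ℝ)) + Real.exp ((inner ℝ x a : ℝ))) := by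
    intro x _
    have h1 := Real.add_one_le_exp (inner ℝ x a : ℝ)
    have h2 := Real.add_one_le_exp (-(inner ℝ x a : ℝ))
    have h3 : (2 : ℝ) ≤ Real.exp (-(inner ℝ x a : ℝ)) + Real.exp ((inner ℝ x a : ℝ)) := by linarith
    nlinarith [Real.exp_nonneg (-‖x‖ ^ 2 / 2)]
  have hmono : ∫ x in B, 2 * Real.exp (-‖x‖ ^ 2 / 2) ≤ I + I := by
    rw [hsum]
    exact setIntegral_mono_on hi5 hi4 hcomp.measurableSet hptwise
  rw [MeasureTheory.integral_const_mul] at hmono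
  linarith
end

section
/- For all real a > 0 and b > 0, ∫_{0}^{∞} z^{−3/2} · exp(−a z − b/z) dz = √(π/b) · exp(−2√(a b)). -/
open MeasureTheory Real
open Set

noncomputable def uu (sa sb z : ℝ) : ℝ := sa * Real.sqrt z - sb / Real.sqrt z

lemma uu_surj (sa sb : ℝ) (hsa : 0 < sa) (hsb : 0 < sb) :
    uu sa sb '' Ioi (0:ℝ) = univ := by
  apply eq_univ_of_forall
  intro y
  set s := Real.sqrt (y^2 + 4*sa*sb) with hs
  have hs2 : s^2 = y^2 + 4*sa*sb := Real.sq_sqrt (by positivity)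
  have hsy : |y| < s := by
    rw [← Real.sqrt_sq_eq_abs]
    apply Real.sqrt_lt_sqrt (by positivity)
    nlinarith
  have ht : 0 < (y + s) / (2*sa) := by
    have h1 : -y < s := by have := abs_lt.1 hsy; linarith [this.1]
    have : 0 < y + s := by linarith
    positivity
  set t := (y + s) / (2*sa) with htdef
  refine ⟨t^2, mem_Ioi.2 (by positivity), ?_⟩
  have hst : Real.sqrt (t^2) = t := Real.sqrt_sq ht.le
  have h2 : 2*sa*t = y + s := by rw [htdef]; field_simp
  have h40 : 4*sa*(sa*t^2 - y*t - sb) = 0 := by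
    linear_combination (2*sa*t - y + s) * h2 + hs2
  have hkey : sa * t^2 - y * t - sb = 0 :=
    (mul_eq_zero.mp h40).resolve_left (by positivity)
  simp only [uu, hst]
  field_simp
  nlinarith [hkey]

lemma uu_inj (sa sb : ℝ) (hsa : 0 < sa) (hsb : 0 < sb) :
    InjOn (uu sa sb) (Ioi (0:ℝ)) := by
  apply StrictMonoOn.injOn
  intro z1 h1 z2 h2 h
  have hz1 : (0:ℝ) < z1 := h1
  have hz2 : (0:ℝ) < z2 := h2
  have hsq : Real.sqrt z1 < Real.sqrt z2 := Real.sqrt_lt_sqrt hz1.le h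
  have hsq1 : 0 < Real.sqrt z1 := Real.sqrt_pos.2 hz1
  have hsq2 : 0 < Real.sqrt z2 := Real.sqrt_pos.2 hz2
  unfold uu
  have h1' : sa * Real.sqrt z1 < sa * Real.sqrt z2 := by nlinarith
  have h2' : sb / Real.sqrt z2 < sb / Real.sqrt z1 :=
    div_lt_div_of_pos_left hsb hsq1 hsq
  linarith

lemma uu_deriv (sa sb : ℝ) {z : ℝ} (hz : z ∈ Ioi (0:ℝ)) :
    HasDerivWithinAt (uu sa sb) (sa/(2*Real.sqrt z) + sb/(2*(z*Real.sqrt z))) (Ioi 0) z := by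
  have hz' : (0:ℝ) < z := hz
  have hsq : 0 < Real.sqrt z := Real.sqrt_pos.2 hz'
  have hzz : (Real.sqrt z)^2 = z := Real.sq_sqrt hz'.le
  have h1 : HasDerivAt Real.sqrt (1/(2*Real.sqrt z)) z := Real.hasDerivAt_sqrt hz'.ne'
  have h2 : HasDerivAt (fun z => sa * Real.sqrt z) (sa * (1/(2*Real.sqrt z))) z := h1.const_mul sa
  have h3 : HasDerivAt (fun z => sb / Real.sqrt z)
      ((0 * Real.sqrt z - sb * (1/(2*Real.sqrt z))) / (Real.sqrt z)^2) z :=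
    (hasDerivAt_const z sb).div h1 hsq.ne'
  have h4 : HasDerivAt (uu sa sb) (sa * (1/(2*Real.sqrt z)) -
      (0 * Real.sqrt z - sb * (1/(2*Real.sqrt z))) / (Real.sqrt z)^2) z := h2.sub h3
  have heq : sa * (1/(2*Real.sqrt z)) -
      (0 * Real.sqrt z - sb * (1/(2*Real.sqrt z))) / (Real.sqrt z)^2
      = sa/(2*Real.sqrt z) + sb/(2*(z*Real.sqrt z)) := by
    rw [← hzz]
    field_simp
    rw [Real.sqrt_sq hsq.le]
    ring
  rw [heq] at h4
  exact h4.hasDerivWithinAt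

lemma recip_image {c : ℝ} (hc : 0 < c) : (fun z => c / z) '' Ioi (0:ℝ) = Ioi 0 := by
  ext w
  constructor
  · rintro ⟨z, hz, rfl⟩
    exact mem_Ioi.2 (div_pos hc hz)
  · intro hw
    exact ⟨c / w, mem_Ioi.2 (div_pos hc hw), by field_simp⟩

lemma recip_inj {c : ℝ} (hc : 0 < c) : InjOn (fun z => c / z) (Ioi (0:ℝ)) := by
  intro z1 h1 z2 h2 h
  have h1' : (0:ℝ) < z1 := h1
  have h2' : (0:ℝ) < z2 := h2
  field_simp at h
  exact h.symm

lemma recip_deriv {c z : ℝ} (hz : z ∈ Ioi (0:ℝ)) :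
    HasDerivWithinAt (fun z => c / z) (-(c/z^2)) (Ioi 0) z := by
  have hz' : (0:ℝ) < z := hz
  have h := (hasDerivAt_inv hz'.ne').const_mul c
  have heq : c * (-(z^2)⁻¹) = -(c/z^2) := by field_simp
  rw [heq] at h
  exact (h.congr_deriv rfl).hasDerivWithinAt.congr (fun y _ => by rw [div_eq_mul_inv]) (by rw [div_eq_mul_inv])

lemma cont_uu (sa sb : ℝ) : ContinuousOn (uu sa sb) (Ioi (0:ℝ)) := by
  apply ContinuousOn.sub
  · exact continuousOn_const.mul Real.continuous_sqrt.continuousOn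
  · exact continuousOn_const.div Real.continuous_sqrt.continuousOn
       (fun z hz => (Real.sqrt_pos.2 hz).ne')

lemma key_integral (sa sb : ℝ) (hsa : 0 < sa) (hsb : 0 < sb) :
    ∫ z in Ioi (0:ℝ), Real.exp (-(uu sa sb z)^2) / (z * Real.sqrt z)
      = Real.sqrt Real.pi / sb := by
  set g1 : ℝ → ℝ := fun z => Real.exp (-(uu sa sb z)^2) / Real.sqrt z with hg1
  set g2 : ℝ → ℝ := fun z => Real.exp (-(uu sa sb z)^2) / (z * Real.sqrt z) with hg2
  set D : ℝ → ℝ := fun z => sa/(2*Real.sqrt z) + sb/(2*(z*Real.sqrt z)) with hD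
  -- continuity facts
  have hcg1 : ContinuousOn g1 (Ioi 0) := by
    apply ContinuousOn.div
    · exact Real.continuous_exp.comp_continuousOn (((cont_uu sa sb).pow 2).neg)
    · exact Real.continuous_sqrt.continuousOn
    · exact fun z hz => (Real.sqrt_pos.2 hz).ne'
  have hcg2 : ContinuousOn g2 (Ioi 0) := by
    apply ContinuousOn.div
    · exact Real.continuous_exp.comp_continuousOn (((cont_uu sa sb).pow 2).neg)
    · exact continuousOn_id.mul Real.continuous_sqrt.continuousOn
    · exact fun z hz => by have : (0:ℝ) < z := hz; positivity
  -- change of variables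
  have hgauss : (∫ x : ℝ, Real.exp (-x^2)) = Real.sqrt Real.pi := by
    have := integral_gaussian 1
    simpa using this
  have hchg : (∫ x : ℝ, Real.exp (-x^2))
      = ∫ z in Ioi (0:ℝ), |D z| • Real.exp (-(uu sa sb z)^2) := by
    rw [← MeasureTheory.setIntegral_univ, ← uu_surj sa sb hsa hsb,
      integral_image_eq_integral_abs_deriv_smul measurableSet_Ioi
        (fun z hz => uu_deriv sa sb hz) (uu_inj sa sb hsa hsb)]
  have hint : IntegrableOn (fun z => |D z| • Real.exp (-(uu sa sb z)^2)) (Ioi 0) := by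
    have h0 : IntegrableOn (fun x => Real.exp (-x^2)) (uu sa sb '' Ioi 0) := by
      rw [uu_surj sa sb hsa hsb]
      have h1 : Integrable (fun x : ℝ => Real.exp (-x^2)) := by
        simpa using integrable_exp_neg_mul_sq (by norm_num : (0:ℝ) < 1)
      exact h1.integrableOn
    have := (integrableOn_image_iff_integrableOn_abs_deriv_smul measurableSet_Ioi
      (fun z hz => uu_deriv sa sb hz) (uu_inj sa sb hsa hsb)
      (fun x => Real.exp (-x^2))).mp h0
    simpa [hD] using this
  -- pointwise decomposition
  have hptwise : ∀ z ∈ Ioi (0:ℝ), |D z| • Real.exp (-(uu sa sb z)^2)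
      = (sa/2) * g1 z + (sb/2) * g2 z := by
    intro z hz
    have hz' : (0:ℝ) < z := hz
    have hsq : 0 < Real.sqrt z := Real.sqrt_pos.2 hz'
    have hDpos : 0 < D z := by
      simp only [hD]
      positivity
    rw [abs_of_pos hDpos, smul_eq_mul]
    simp only [hD, hg1, hg2]
    field_simp
  -- integrability of g1 and g2 separately
  have hDE : IntegrableOn (fun z => (sa/2) * g1 z + (sb/2) * g2 z) (Ioi 0) :=
    hint.congr_fun hptwise measurableSet_Ioi
  have hg1nn : ∀ z ∈ Ioi (0:ℝ), 0 ≤ g1 z := by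
    intro z hz
    have : (0:ℝ) < z := hz
    simp only [hg1]
    positivity
  have hg2nn : ∀ z ∈ Ioi (0:ℝ), 0 ≤ g2 z := by
    intro z hz
    have : (0:ℝ) < z := hz
    simp only [hg2]
    positivity
  have hg1int : IntegrableOn g1 (Ioi 0) := by
    apply Integrable.mono' (hDE.const_mul (2/sa))
      (hcg1.aestronglyMeasurable measurableSet_Ioi)
    filter_upwards [ae_restrict_mem measurableSet_Ioi] with z hz
    have h1 := hg1nn z hz
    have h2 := hg2nn z hz
    rw [Real.norm_of_nonneg h1]
    have : (2/sa) * ((sa/2) * g1 z + (sb/2) * g2 z)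
        = g1 z + (sb/sa) * g2 z := by field_simp
    rw [this]
    have : 0 ≤ (sb/sa) * g2 z := by positivity
    linarith
  have hg2int : IntegrableOn g2 (Ioi 0) := by
    apply Integrable.mono' (hDE.const_mul (2/sb))
      (hcg2.aestronglyMeasurable measurableSet_Ioi)
    filter_upwards [ae_restrict_mem measurableSet_Ioi] with z hz
    have h1 := hg1nn z hz
    have h2 := hg2nn z hz
    rw [Real.norm_of_nonneg h2]
    have : (2/sb) * ((sa/2) * g1 z + (sb/2) * g2 z)
        = (sa/sb) * g1 z + g2 z := by field_simp
    rw [this]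
    have : 0 ≤ (sa/sb) * g1 z := by positivity
    linarith
  -- split the integral
  have hsplit : Real.sqrt Real.pi
      = (sa/2) * (∫ z in Ioi (0:ℝ), g1 z) + (sb/2) * (∫ z in Ioi (0:ℝ), g2 z) := by
    rw [← hgauss, hchg, setIntegral_congr_fun measurableSet_Ioi hptwise,
      integral_add (hg1int.const_mul _) (hg2int.const_mul _),
      MeasureTheory.integral_const_mul, MeasureTheory.integral_const_mul]
  -- reciprocal substitution: J = (sb/sa) * I
  have hcpos : (0:ℝ) < (sb/sa)^2 := by positivity
  have hJ : (∫ z in Ioi (0:ℝ), g1 z) = (sb/sa) * ∫ z in Ioi (0:ℝ), g2 z := by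
    have himg := integral_image_eq_integral_abs_deriv_smul measurableSet_Ioi
      (fun z hz => recip_deriv (c := (sb/sa)^2) hz) (recip_inj hcpos) g1
    rw [recip_image hcpos] at himg
    rw [himg, ← MeasureTheory.integral_const_mul]
    apply setIntegral_congr_fun measurableSet_Ioi
    intro z hz
    have hz' : (0:ℝ) < z := hz
    have hsq : 0 < Real.sqrt z := Real.sqrt_pos.2 hz'
    have hzz : Real.sqrt z * Real.sqrt z = z := Real.mul_self_sqrt hz'.le
    have h1 : Real.sqrt ((sb/sa)^2/z) = (sb/sa)/Real.sqrt z := by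
      rw [Real.sqrt_div (by positivity), Real.sqrt_sq (by positivity)]
    have h2 : uu sa sb ((sb/sa)^2/z) = -(uu sa sb z) := by
      simp only [uu, h1]
      field_simp
      ring
    simp only [hg1, hg2, h2, neg_sq, smul_eq_mul]
    rw [abs_of_nonpos (neg_nonpos.2 (by positivity)), neg_neg, h1]
    have hs2 : Real.sqrt z ^ 2 = z := Real.sq_sqrt hz'.le
    field_simp
    linear_combination hs2
  rw [hJ] at hsplit
  have hfin : Real.sqrt Real.pi = sb * ∫ z in Ioi (0:ℝ), g2 z := by
    rw [hsplit]; field_simp; ring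
  rw [eq_div_iff hsb.ne']
  linarith [hfin]



/-- inverse-Gaussian normalizing constant: for `a, b > 0`,
`∫_0^∞ z^{−3/2} exp(−a z − b/z) dz = √(π/b) · exp(−2√(ab))`. -/
theorem inverse_gaussian_normalizing_constant (a b : ℝ) (ha : 0 < a) (hb : 0 < b) :
    ∫ z in Set.Ioi (0 : ℝ), z ^ (-(3 : ℝ) / 2) * Real.exp (-(a * z) - b / z) =
      Real.sqrt (Real.pi / b) * Real.exp (-2 * Real.sqrt (a * b)) := by
  set sa := Real.sqrt a with hsadef
  set sb := Real.sqrt b with hsbdef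
  have hsa : 0 < sa := Real.sqrt_pos.2 ha
  have hsb : 0 < sb := Real.sqrt_pos.2 hb
  have h1 : sa^2 = a := Real.sq_sqrt ha.le
  have h2 : sb^2 = b := Real.sq_sqrt hb.le
  have hab : Real.sqrt (a*b) = sa*sb := Real.sqrt_mul ha.le b
  have hcong : ∀ z ∈ Set.Ioi (0:ℝ), z ^ (-(3:ℝ)/2) * Real.exp (-(a*z) - b/z)
      = Real.exp (-2 * Real.sqrt (a*b)) * (Real.exp (-(uu sa sb z)^2) / (z * Real.sqrt z)) := by
    intro z hz
    have hz' : (0:ℝ) < z := hz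
    have hsq : 0 < Real.sqrt z := Real.sqrt_pos.2 hz'
    have h3 : Real.sqrt z^2 = z := Real.sq_sqrt hz'.le
    have hrp : z ^ (-(3:ℝ)/2) = 1/(z * Real.sqrt z) := by
      rw [show (-(3:ℝ)/2) = -(3/2) by norm_num, Real.rpow_neg hz'.le,
        show (3:ℝ)/2 = 1 + 1/2 by norm_num, Real.rpow_add hz', Real.rpow_one,
        ← Real.sqrt_eq_rpow, one_div]
    have h5 : uu sa sb z * Real.sqrt z = sa * z - sb := by
      simp only [uu]
      field_simp
      linear_combination sa * h3
    have h4 : uu sa sb z ^ 2 * z = (sa*z - sb)^2 := by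
      have := congrArg (·^2) h5
      simp only [mul_pow] at this
      rw [h3] at this
      exact this
    have hu : uu sa sb z ^ 2 = a*z - 2*(sa*sb) + b/z := by
      field_simp
      linear_combination h4 + z^2 * h1 + h2
    have hexp : Real.exp (-(a*z) - b/z)
        = Real.exp (-2*Real.sqrt (a*b)) * Real.exp (-(uu sa sb z)^2) := by
      rw [← Real.exp_add]
      congr 1
      rw [hu, hab]
      ring
    rw [hrp, hexp]
    ring
  rw [MeasureTheory.setIntegral_congr_fun measurableSet_Ioi hcong,
    MeasureTheory.integral_const_mul, key_integral sa sb hsa hsb,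
    Real.sqrt_div Real.pi_pos.le]
  ring
end
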